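/- Let A be maximally dissipative with Lagrange identities ⟨Au,v⟩−⟨u,Av⟩ = i⟨Γu,Γv⟩_E on D(A) and ⟨A*u,v⟩−⟨u,A*v⟩ = −i⟨Γ_*u,Γ_*v⟩_{E_*} on D(A*). Then for each z ∈ ℂ₊ there exists a unique contraction S(z) : E → E_* such that S(z)Γu = Γ_*(A*−z)^{-1}(A−z)u for all u ∈ D(A), and z ↦ S(z) is analytic on ℂ₊. -/

import Mathlib

open Complex MeasureTheory

noncomputable section

variable {H : Type*} [NormedAddCommGroup H] [InnerProductSpace ℂ H] [CompleteSpace H]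

local notation "⟪" x ", " y "⟫" => @inner ℂ _ _ x y

/-- `A` is dissipative: densely defined with `Im ⟨Au,u⟩ ≥ 0`
(the paper's inner product is linear in the first slot, so `⟨Au,u⟩ = ⟪u, Au⟫` in
Mathlib's convention). -/
def IsDissipative (A : H →ₗ.[ℂ] H) : Prop :=
  Dense (A.domain : Set H) ∧ ∀ u : A.domain, 0 ≤ (⟪(u : H), A u⟫).im

/-- Maximally dissipative: dissipative with no nontrivial dissipative extension. -/
def IsMaxDissipative (A : H →ₗ.[ℂ] H) : Prop :=
  IsDissipative A ∧ ∀ B : H →ₗ.[ℂ] H, IsDissipative B → A ≤ B → B = A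

/-- `R` is the everywhere-defined bounded resolvent `(A - z)⁻¹` of `A`. -/
def IsResolventAt (A : H →ₗ.[ℂ] H) (z : ℂ) (R : H →L[ℂ] H) : Prop :=
  (∀ u : A.domain, R (A u - z • (u : H)) = (u : H)) ∧
  ∀ h : H, ∃ u : A.domain, (u : H) = R h ∧ A u - z • (u : H) = h

section Aux

set_option linter.unusedSectionVars false

lemma aux_sqrt_le {a b : ℝ} (h : a^2 ≤ b^2) (ha : 0 ≤ a) (hb : 0 ≤ b) : a ≤ b := by
  nlinarith

/-- Bound the norm of a CLM by its behavior on a dense range. -/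
lemma aux_opnorm_le {M : Type*} [AddCommGroup M] [Module ℂ M]
    {E Es : Type*} [NormedAddCommGroup E] [NormedSpace ℂ E]
    [NormedAddCommGroup Es] [NormedSpace ℂ Es]
    (Γ : M →ₗ[ℂ] E) (hΓd : DenseRange Γ) (T : E →L[ℂ] Es) {c : ℝ} (hc : 0 ≤ c)
    (hb : ∀ u, ‖T (Γ u)‖ ≤ c * ‖Γ u‖) : ‖T‖ ≤ c := by
  refine T.opNorm_le_bound hc ?_
  have hcl : IsClosed {x : E | ‖T x‖ ≤ c * ‖x‖} :=
    isClosed_le (T.continuous.norm) (continuous_const.mul continuous_norm)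
  intro x
  exact hΓd.induction_on x hcl hb

lemma aux_eq_of_agree {M : Type*} [AddCommGroup M] [Module ℂ M]
    {E Es : Type*} [NormedAddCommGroup E] [NormedSpace ℂ E]
    [NormedAddCommGroup Es] [NormedSpace ℂ Es]
    (Γ : M →ₗ[ℂ] E) (hΓd : DenseRange Γ) (T T' : E →L[ℂ] Es)
    (hb : ∀ u, T (Γ u) = T' (Γ u)) : T = T' := by
  have h : ‖T - T'‖ ≤ 0 := by
    refine aux_opnorm_le Γ hΓd (T - T') le_rfl ?_
    intro u
    simp [ContinuousLinearMap.sub_apply, hb u]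
  have := le_antisymm h (norm_nonneg _)
  rwa [norm_eq_zero, sub_eq_zero] at this

/-- Extend a linear map defined through `Γ` to a continuous linear map on `E`. -/
lemma aux_extend {M : Type*} [AddCommGroup M] [Module ℂ M]
    {E Es : Type*} [NormedAddCommGroup E] [NormedSpace ℂ E]
    [NormedAddCommGroup Es] [NormedSpace ℂ Es] [CompleteSpace Es]
    (Γ : M →ₗ[ℂ] E) (hΓd : DenseRange Γ) (L : M →ₗ[ℂ] Es) {c : ℝ} (hc : 0 ≤ c)
    (hb : ∀ u, ‖L u‖ ≤ c * ‖Γ u‖) :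
    ∃ T : E →L[ℂ] Es, ‖T‖ ≤ c ∧ ∀ u, T (Γ u) = L u := by
  have hker : LinearMap.ker Γ ≤ LinearMap.ker L := by
    intro u hu
    rw [LinearMap.mem_ker] at hu ⊢
    have := hb u
    rw [hu, norm_zero, mul_zero] at this
    exact norm_le_zero_iff.mp this
  set f : ↥(LinearMap.range Γ) →ₗ[ℂ] Es :=
    ((LinearMap.ker Γ).liftQ L hker).comp (Γ.quotKerEquivRange).symm.toLinearMap with hf
  have hfapp : ∀ (u : M) (h : Γ u ∈ LinearMap.range Γ), f ⟨Γ u, h⟩ = L u := by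
    intro u h
    have h1 : (Γ.quotKerEquivRange).symm ⟨Γ u, h⟩ = Submodule.Quotient.mk u := by
      rw [LinearEquiv.symm_apply_eq]
      exact Subtype.ext (Γ.quotKerEquivRange_apply_mk u)
    rw [hf]
    simp only [LinearMap.comp_apply, LinearEquiv.coe_toLinearMap, h1, Submodule.liftQ_apply]
  have hfb : ∀ x : ↥(LinearMap.range Γ), ‖f x‖ ≤ c * ‖x‖ := by
    rintro ⟨x, hx⟩
    obtain ⟨u, rfl⟩ := hx
    rw [hfapp u ⟨u, rfl⟩]
    simpa using hb u
  set fC : ↥(LinearMap.range Γ) →L[ℂ] Es := f.mkContinuous c hfb with hfC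
  set e : ↥(LinearMap.range Γ) →L[ℂ] E := (LinearMap.range Γ).subtypeL with he
  have hd : DenseRange e := by
    have h1 : Set.range ⇑e = (LinearMap.range Γ : Set E) := Subtype.range_coe
    rw [DenseRange, h1]
    have h2 : (LinearMap.range Γ : Set E) = Set.range ⇑Γ := by
      ext x; simp [LinearMap.mem_range]
    rw [h2]; exact hΓd
  have h_e : ∀ x : ↥(LinearMap.range Γ), ‖x‖ ≤ ((1 : NNReal) : ℝ) * ‖e x‖ := by
    intro x; simp [he]
  refine ⟨fC.extend e,
    ?_, ?_⟩
  · calc ‖fC.extend e‖ ≤ ((1:NNReal):ℝ) * ‖fC‖ := fC.opNorm_extend_le hd h_e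
      _ ≤ c := by rw [NNReal.coe_one, one_mul]; exact f.mkContinuous_norm_le hc hfb
  · intro u
    have h3 : Γ u = e ⟨Γ u, ⟨u, rfl⟩⟩ := rfl
    rw [h3, ContinuousLinearMap.extend_eq _ hd (ContinuousLinearMap.isUniformEmbedding_of_bound e h_e).isUniformInducing]
    exact hfapp u ⟨u, rfl⟩

variable {E Es : Type*} [NormedAddCommGroup E] [InnerProductSpace ℂ E]
  [NormedAddCommGroup Es] [InnerProductSpace ℂ Es]

lemma aux_im_eq (x y : H) (gx : Es) (h : ⟪x, y⟫ - ⟪y, x⟫ = Complex.I * ⟪gx, gx⟫) :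
    ‖gx‖^2 = 2 * (⟪x, y⟫).im := by
  have e1 : ⟪y, x⟫ = (starRingEnd ℂ) ⟪x, y⟫ := (inner_conj_symm _ _).symm
  have e2 : ⟪gx, gx⟫ = ((‖gx‖^2 : ℝ) : ℂ) := by
    rw [inner_self_eq_norm_sq_to_K]; norm_cast
  rw [e1, e2] at h
  have := congrArg Complex.im h
  simp only [Complex.sub_im, Complex.conj_im, Complex.mul_im, Complex.I_re, Complex.I_im,
    Complex.ofReal_re, Complex.ofReal_im, zero_mul, one_mul, mul_zero, add_zero, zero_add] at this
  linarith

lemma aux_im_eq' (x y : H) (gx : Es) (h : ⟪x, y⟫ - ⟪y, x⟫ = -(Complex.I * ⟪gx, gx⟫)) :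
    ‖gx‖^2 = -(2 * (⟪x, y⟫).im) := by
  have e1 : ⟪y, x⟫ = (starRingEnd ℂ) ⟪x, y⟫ := (inner_conj_symm _ _).symm
  have e2 : ⟪gx, gx⟫ = ((‖gx‖^2 : ℝ) : ℂ) := by
    rw [inner_self_eq_norm_sq_to_K]; norm_cast
  rw [e1, e2] at h
  have := congrArg Complex.im h
  simp only [Complex.sub_im, Complex.conj_im, Complex.neg_im, Complex.mul_im, Complex.I_re,
    Complex.I_im, Complex.ofReal_re, Complex.ofReal_im, zero_mul, one_mul, mul_zero, add_zero,
    zero_add] at this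
  linarith

lemma aux_im_split (x y : H) (z : ℂ) :
    (⟪x, y⟫).im = (⟪x, y - z • x⟫).im + z.im * ‖x‖^2 := by
  rw [inner_sub_right, inner_smul_right]
  have e2 : ⟪x, x⟫ = ((‖x‖^2 : ℝ) : ℂ) := by rw [inner_self_eq_norm_sq_to_K]; norm_cast
  rw [e2]
  simp only [Complex.sub_im, Complex.mul_im, Complex.ofReal_re, Complex.ofReal_im, mul_zero,
    add_zero]
  ring

lemma aux_im_le (x y : H) : -(⟪x, y⟫).im ≤ ‖x‖ * ‖y‖ := by
  have h1 : -(⟪x, y⟫).im ≤ |(⟪x, y⟫).im| := neg_le_abs _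
  have h2 : |(⟪x, y⟫).im| ≤ ‖⟪x, y⟫‖ := Complex.abs_im_le_norm _
  have h3 : ‖⟪x, y⟫‖ = ‖⟪x, y⟫‖ := rfl
  have h4 : ‖⟪x, y⟫‖ ≤ ‖x‖ * ‖y‖ := norm_inner_le_norm _ _
  linarith

/-- The key identity: if `(A* - z) v = (A - z) u`, then
`‖Γ u‖² - ‖Γs v‖² = 2 (Im z) ‖u - v‖²`. -/
lemma aux_key_identity (A : H →ₗ.[ℂ] H) (hdense : Dense (A.domain : Set H))
    (Γ : A.domain →ₗ[ℂ] E) (Γs : A.adjoint.domain →ₗ[ℂ] Es)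
    (hLag : ∀ u v : A.domain, ⟪(v : H), A u⟫ - ⟪A v, (u : H)⟫ = Complex.I * ⟪Γ v, Γ u⟫)
    (hLagS : ∀ u v : A.adjoint.domain,
      ⟪(v : H), A.adjoint u⟫ - ⟪A.adjoint v, (u : H)⟫ = -(Complex.I * ⟪Γs v, Γs u⟫))
    (z : ℂ) (u : A.domain) (v : A.adjoint.domain)
    (hv : A.adjoint v - z • (v : H) = A u - z • (u : H)) :
    ‖Γ u‖^2 - ‖Γs v‖^2 = 2 * z.im * ‖(u : H) - (v : H)‖^2 := by
  have hfa := LinearPMap.adjoint_isFormalAdjoint (T := A) hdense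
  have h1 : ‖Γ u‖^2 = 2 * (⟪(u:H), A u⟫).im := aux_im_eq _ _ _ (hLag u u)
  have h2 : ‖Γs v‖^2 = -(2 * (⟪(v:H), A.adjoint v⟫).im) := aux_im_eq' _ _ _ (hLagS v v)
  have hau := aux_im_split (u:H) (A u) z
  have hav := aux_im_split (v:H) (A.adjoint v) z
  rw [hv] at hav
  have e1 : ⟪(u:H), A u - z • (u:H)⟫
      = (starRingEnd ℂ) ⟪(v:H), A u⟫ - z * ⟪(u:H), (v:H)⟫ := by
    rw [← hv, inner_sub_right, inner_smul_right]
    congr 1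
    rw [← inner_conj_symm, hfa v u]
  have e2 : ⟪(v:H), A u - z • (u:H)⟫
      = ⟪(v:H), A u⟫ - z * ((starRingEnd ℂ) ⟪(u:H), (v:H)⟫) := by
    rw [inner_sub_right, inner_smul_right, inner_conj_symm]
  have hns : ‖(u:H) - (v:H)‖^2 = ‖(u:H)‖^2 - 2*(⟪(u:H), (v:H)⟫).re + ‖(v:H)‖^2 := by
    have := @norm_sub_sq ℂ H _ _ _ (u:H) (v:H)
    simpa using this
  have i1 := congrArg Complex.im e1
  have i2 := congrArg Complex.im e2
  simp only [Complex.sub_im, Complex.conj_im, Complex.mul_im, Complex.conj_re] at i1 i2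
  rw [h1, h2, hau, hav, i1, i2, hns]
  ring

/-- `‖Γs v‖² · 2 Im z ≤ ‖(A* - z) v‖²`. -/
lemma aux_gammaS_bound (A : H →ₗ.[ℂ] H) (Γs : A.adjoint.domain →ₗ[ℂ] Es)
    (hLagS : ∀ u v : A.adjoint.domain,
      ⟪(v : H), A.adjoint u⟫ - ⟪A.adjoint v, (u : H)⟫ = -(Complex.I * ⟪Γs v, Γs u⟫))
    (z : ℂ) (hz : 0 < z.im) (v : A.adjoint.domain) :
    ‖Γs v‖^2 * (2 * z.im) ≤ ‖A.adjoint v - z • (v : H)‖^2 := by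
  have h2 : ‖Γs v‖^2 = -(2 * (⟪(v:H), A.adjoint v⟫).im) := aux_im_eq' _ _ _ (hLagS v v)
  have hav := aux_im_split (v:H) (A.adjoint v) z
  have hle := aux_im_le (v:H) (A.adjoint v - z • (v:H))
  have hn1 : (0:ℝ) ≤ ‖(v:H)‖ := norm_nonneg _
  have hn2 : (0:ℝ) ≤ ‖A.adjoint v - z • (v:H)‖ := norm_nonneg _
  nlinarith [sq_nonneg (‖A.adjoint v - z • (v:H)‖ - 2 * z.im * ‖(v:H)‖)]

/-- `Im z · ‖v‖ ≤ ‖(A* - z) v‖`. -/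
lemma aux_res_bound (A : H →ₗ.[ℂ] H) (Γs : A.adjoint.domain →ₗ[ℂ] Es)
    (hLagS : ∀ u v : A.adjoint.domain,
      ⟪(v : H), A.adjoint u⟫ - ⟪A.adjoint v, (u : H)⟫ = -(Complex.I * ⟪Γs v, Γs u⟫))
    (z : ℂ) (hz : 0 < z.im) (v : A.adjoint.domain) :
    z.im * ‖(v : H)‖ ≤ ‖A.adjoint v - z • (v : H)‖ := by
  have h2 : ‖Γs v‖^2 = -(2 * (⟪(v:H), A.adjoint v⟫).im) := aux_im_eq' _ _ _ (hLagS v v)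
  have hav := aux_im_split (v:H) (A.adjoint v) z
  have hle := aux_im_le (v:H) (A.adjoint v - z • (v:H))
  have hs : (0:ℝ) ≤ ‖Γs v‖^2 := sq_nonneg _
  have hn2 : (0:ℝ) ≤ ‖A.adjoint v - z • (v:H)‖ := norm_nonneg _
  rcases eq_or_lt_of_le (norm_nonneg ((v:H))) with h0 | h0
  · rw [← h0, mul_zero]; exact hn2
  · nlinarith

end Aux

set_option maxHeartbeats 1000000 in
/-- Existence, uniqueness and analyticity of the Štraus characteristic function `S(z)`
on the upper half-plane: `S(z) Γ u = Γ_* (A*-z)⁻¹ (A-z) u`. -/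
theorem characteristic_function_exists
    {E Es : Type*} [NormedAddCommGroup E] [InnerProductSpace ℂ E] [CompleteSpace E]
    [NormedAddCommGroup Es] [InnerProductSpace ℂ Es] [CompleteSpace Es]
    (A : H →ₗ.[ℂ] H) (hA : IsMaxDissipative A)
    (Γ : A.domain →ₗ[ℂ] E) (Γs : A.adjoint.domain →ₗ[ℂ] Es)
    (hΓb : ∃ C : ℝ, ∀ u : A.domain, ‖Γ u‖ ≤ C * (‖(u : H)‖ + ‖A u‖))
    (hΓsb : ∃ C : ℝ, ∀ u : A.adjoint.domain, ‖Γs u‖ ≤ C * (‖(u : H)‖ + ‖A.adjoint u‖))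
    (hΓd : DenseRange Γ) (hΓsd : DenseRange Γs)
    (hLag : ∀ u v : A.domain, ⟪(v : H), A u⟫ - ⟪A v, (u : H)⟫ = Complex.I * ⟪Γ v, Γ u⟫)
    (hLagS : ∀ u v : A.adjoint.domain,
      ⟪(v : H), A.adjoint u⟫ - ⟪A.adjoint v, (u : H)⟫ = -(Complex.I * ⟪Γs v, Γs u⟫))
    -- resolvents of `A*` in the upper half-plane and the maps `G z = Γ_* (A*-z)⁻¹`
    (RS : ℂ → H →L[ℂ] H) (hRS : ∀ z : ℂ, 0 < z.im → IsResolventAt A.adjoint z (RS z))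
    (G : ℂ → H →L[ℂ] Es)
    (hG : ∀ z : ℂ, 0 < z.im → ∀ u : A.adjoint.domain, G z (A.adjoint u - z • (u : H)) = Γs u) :
    ∃ S : ℂ → E →L[ℂ] Es,
      (∀ z : ℂ, 0 < z.im →
        ‖S z‖ ≤ 1 ∧
        (∀ u : A.domain, S z (Γ u) = G z (A u - z • (u : H))) ∧
        (∀ T : E →L[ℂ] Es, ‖T‖ ≤ 1 →
          (∀ u : A.domain, T (Γ u) = G z (A u - z • (u : H))) → T = S z)) ∧
      DifferentiableOn ℂ S {z : ℂ | 0 < z.im} := by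
  classical
  have hdense : Dense (A.domain : Set H) := hA.1.1
  -- norm bound for `G z`
  have hGb : ∀ z : ℂ, 0 < z.im → ∀ h : H, ‖G z h‖^2 * (2 * z.im) ≤ ‖h‖^2 := by
    intro z hz h
    obtain ⟨v, hv1, hv2⟩ := (hRS z hz).2 h
    rw [← hv2, hG z hz v]
    exact aux_gammaS_bound A Γs hLagS z hz v
  -- norm bound for `RS z`
  have hRb : ∀ z : ℂ, 0 < z.im → ∀ h : H, z.im * ‖RS z h‖ ≤ ‖h‖ := by
    intro z hz h
    obtain ⟨v, hv1, hv2⟩ := (hRS z hz).2 h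
    rw [← hv1, ← hv2]
    exact aux_res_bound A Γs hLagS z hz v
  -- contraction bound for `S z` on the range of `Γ`
  have hSb : ∀ z : ℂ, 0 < z.im → ∀ u : A.domain,
      ‖G z (A u - z • (u:H))‖ ≤ 1 * ‖Γ u‖ := by
    intro z hz u
    obtain ⟨v, hv1, hv2⟩ := (hRS z hz).2 (A u - z • (u:H))
    rw [← hv2, hG z hz v]
    have hk := aux_key_identity A hdense Γ Γs hLag hLagS z u v hv2
    have h1 : (0:ℝ) ≤ 2 * z.im * ‖(u:H) - (v:H)‖^2 := by positivity
    have hsq : ‖Γs v‖^2 ≤ ‖Γ u‖^2 := by linarith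
    rw [one_mul]
    exact aux_sqrt_le hsq (norm_nonneg _) (norm_nonneg _)
  -- existence of `S z`
  have hSex : ∀ z : ℂ, 0 < z.im → ∃ T : E →L[ℂ] Es, ‖T‖ ≤ 1 ∧
      ∀ u : A.domain, T (Γ u) = G z (A u - z • (u:H)) := by
    intro z hz
    set L : A.domain →ₗ[ℂ] Es :=
      (G z : H →L[ℂ] Es).toLinearMap.comp (A.toFun - z • (A.domain).subtype) with hL
    have hLa : ∀ u : A.domain, L u = G z (A u - z • (u:H)) := by
      intro u; simp [hL, LinearPMap.toFun_eq_coe]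
    obtain ⟨T, hT1, hT2⟩ := aux_extend Γ hΓd L zero_le_one
      (fun u => by rw [hLa u]; exact hSb z hz u)
    exact ⟨T, hT1, fun u => by rw [hT2 u, hLa u]⟩
  -- bound for the candidate derivative on the range of `Γ`
  have hS'b : ∀ w : ℂ, 0 < w.im → ∀ u : A.domain,
      ‖G w ((RS w) (A u - w • (u:H)) - (u:H))‖ ≤ (2*w.im)⁻¹ * ‖Γ u‖ := by
    intro w hw u
    obtain ⟨v, hv1, hv2⟩ := (hRS w hw).2 (A u - w • (u:H))
    rw [← hv1]
    have hk := aux_key_identity A hdense Γ Γs hLag hLagS w u v hv2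
    have hb1 := hGb w hw ((v:H) - (u:H))
    have h4 : ‖(v:H) - (u:H)‖ = ‖(u:H) - (v:H)‖ := norm_sub_rev _ _
    rw [h4] at hb1
    have d1 : (‖G w ((v:H) - (u:H))‖^2*(2*w.im))*(2*w.im)
        ≤ ‖(u:H) - (v:H)‖^2*(2*w.im) :=
      mul_le_mul_of_nonneg_right hb1 (by positivity)
    have hsq : (‖G w ((v:H) - (u:H))‖ * (2*w.im))^2 ≤ ‖Γ u‖^2 := by
      nlinarith [d1, sq_nonneg (‖Γs v‖)]
    have hle := aux_sqrt_le hsq (by positivity) (norm_nonneg _)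
    rw [inv_mul_eq_div, le_div_iff₀ (by positivity : (0:ℝ) < 2*w.im)]
    linarith
  -- existence of the candidate derivative `S' w`
  have hS'ex : ∀ w : ℂ, 0 < w.im → ∃ T : E →L[ℂ] Es,
      ∀ u : A.domain, T (Γ u) = G w ((RS w) (A u - w • (u:H)) - (u:H)) := by
    intro w hw
    set L' : A.domain →ₗ[ℂ] Es := (G w : H →L[ℂ] Es).toLinearMap.comp
      (((RS w : H →L[ℂ] H).toLinearMap.comp (A.toFun - w • (A.domain).subtype))
        - (A.domain).subtype) with hL'
    have hLa : ∀ u : A.domain, L' u = G w ((RS w) (A u - w • (u:H)) - (u:H)) := by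
      intro u; simp [hL', LinearPMap.toFun_eq_coe]
    obtain ⟨T, _, hT2⟩ := aux_extend Γ hΓd L' (by positivity : (0:ℝ) ≤ (2*w.im)⁻¹)
      (fun u => by rw [hLa u]; exact hS'b w hw u)
    exact ⟨T, fun u => by rw [hT2 u, hLa u]⟩
  set S : ℂ → E →L[ℂ] Es := fun z => if hz : 0 < z.im then (hSex z hz).choose else 0 with hSdef
  set S' : ℂ → E →L[ℂ] Es := fun w => if hw : 0 < w.im then (hS'ex w hw).choose else 0 with hS'def
  have hSn : ∀ z (hz : 0 < z.im), ‖S z‖ ≤ 1 := by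
    intro z hz; simp only [hSdef, dif_pos hz]; exact (hSex z hz).choose_spec.1
  have hSa : ∀ z (hz : 0 < z.im) (u : A.domain), S z (Γ u) = G z (A u - z • (u:H)) := by
    intro z hz u; simp only [hSdef, dif_pos hz]; exact (hSex z hz).choose_spec.2 u
  have hS'a : ∀ w (hw : 0 < w.im) (u : A.domain),
      S' w (Γ u) = G w ((RS w) (A u - w • (u:H)) - (u:H)) := by
    intro w hw u; simp only [hS'def, dif_pos hw]; exact (hS'ex w hw).choose_spec u
  -- the main estimate
  have hEst : ∀ w z : ℂ, 0 < w.im → 0 < z.im →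
      ‖S z - S w - (z - w) • S' w‖ ≤ ‖z - w‖^2 / (2 * w.im * z.im) := by
    intro w z hw hz
    refine aux_opnorm_le Γ hΓd _ (by positivity) ?_
    intro u
    rw [ContinuousLinearMap.sub_apply, ContinuousLinearMap.sub_apply,
      ContinuousLinearMap.smul_apply, hSa z hz u, hSa w hw u, hS'a w hw u]
    obtain ⟨vw, hvw1, hvw2⟩ := (hRS w hw).2 (A u - w • (u:H))
    obtain ⟨p, hp1, hp2⟩ := (hRS z hz).2 ((vw:H) - (u:H))
    rw [← hvw1]
    have hSw : G w (A u - w • (u:H)) = Γs vw := by rw [← hvw2]; exact hG w hw vw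
    have key : A.adjoint (vw + (z - w) • p) - z • ((vw + (z - w) • p : A.adjoint.domain) : H)
        = A u - z • (u:H) := by
      have e1 : A.adjoint vw = (A u - w • (u:H)) + w • (vw:H) := by rw [← hvw2]; module
      have e2 : A.adjoint p = ((vw:H) - (u:H)) + z • (p:H) := by rw [← hp2]; module
      rw [A.adjoint.map_add, A.adjoint.map_smul, e1, e2]
      have ec : ((vw + (z - w) • p : A.adjoint.domain) : H) = (vw:H) + (z - w) • (p:H) := rfl
      rw [ec]
      module
    have hSz : G z (A u - z • (u:H)) = Γs vw + (z - w) • Γs p := by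
      rw [← key, hG z hz (vw + (z - w) • p), map_add, _root_.map_smul]
    have hS'wv : G w ((vw:H) - (u:H)) = Γs p - (z - w) • G w (p:H) := by
      have e3 : (vw:H) - (u:H) = (A.adjoint p - w • (p:H)) - (z - w) • (p:H) := by
        rw [← hp2]; module
      rw [e3, map_sub, _root_.map_smul, hG w hw p]
    rw [hSz, hSw, hS'wv]
    have ecol : Γs vw + (z - w) • Γs p - Γs vw - (z - w) • (Γs p - (z - w) • G w (p:H))
        = ((z-w)^2) • G w (p:H) := by module
    rw [ecol, norm_smul, norm_pow]
    -- numeric bound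
    have hk := aux_key_identity A hdense Γ Γs hLag hLagS w u vw hvw2
    have b1 := hGb w hw (p:H)
    have b2 : z.im * ‖(p:H)‖ ≤ ‖(vw:H) - (u:H)‖ := by
      have := hRb z hz ((vw:H) - (u:H)); rwa [← hp1] at this
    have h4 : ‖(vw:H) - (u:H)‖ = ‖(u:H) - (vw:H)‖ := norm_sub_rev _ _
    rw [h4] at b2
    have c1 : (z.im * ‖(p:H)‖)^2 ≤ ‖(u:H) - (vw:H)‖^2 :=
      pow_le_pow_left₀ (by positivity) b2 2
    have c2 : 2*w.im*‖(u:H) - (vw:H)‖^2 ≤ ‖Γ u‖^2 := by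
      linarith [sq_nonneg (‖Γs vw‖)]
    have d1 : (‖G w (p:H)‖^2*(2*w.im)) * (2*w.im*z.im^2)
        ≤ ‖(p:H)‖^2 * (2*w.im*z.im^2) := by
      apply mul_le_mul_of_nonneg_right b1 (by positivity)
    have c3 : (‖G w (p:H)‖*(2*w.im*z.im))^2 ≤ ‖Γ u‖^2 := by
      calc (‖G w (p:H)‖*(2*w.im*z.im))^2
          = (‖G w (p:H)‖^2*(2*w.im)) * (2*w.im*z.im^2) := by ring
        _ ≤ ‖(p:H)‖^2 * (2*w.im*z.im^2) := d1
        _ = (z.im * ‖(p:H)‖)^2 * (2*w.im) := by ring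
        _ ≤ ‖(u:H) - (vw:H)‖^2 * (2*w.im) := by
            apply mul_le_mul_of_nonneg_right c1 (by positivity)
        _ = 2*w.im*‖(u:H) - (vw:H)‖^2 := by ring
        _ ≤ ‖Γ u‖^2 := c2
    have hg : ‖G w (p:H)‖ * (2*w.im*z.im) ≤ ‖Γ u‖ :=
      aux_sqrt_le c3 (by positivity) (norm_nonneg _)
    have hg2 : ‖G w (p:H)‖ ≤ ‖Γ u‖ / (2*w.im*z.im) := by
      rw [le_div_iff₀ (by positivity : (0:ℝ) < 2*w.im*z.im)]; exact hg
    calc ‖z-w‖^2 * ‖G w (p:H)‖ ≤ ‖z-w‖^2 * (‖Γ u‖/(2*w.im*z.im)) := by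
          apply mul_le_mul_of_nonneg_left hg2 (by positivity)
      _ = ‖z-w‖^2/(2*w.im*z.im) * ‖Γ u‖ := by ring
  -- differentiability
  have hDeriv : ∀ w : ℂ, 0 < w.im → HasDerivAt S (S' w) w := by
    intro w hw
    rw [hasDerivAt_iff_isLittleO, Asymptotics.isLittleO_iff]
    intro c hc
    have h1 : {z : ℂ | w.im/2 < z.im} ∈ nhds w :=
      (isOpen_lt continuous_const Complex.continuous_im).mem_nhds (by simp; linarith)
    have h2 : Metric.closedBall w (c * (w.im * w.im)) ∈ nhds w :=
      Metric.closedBall_mem_nhds w (by positivity)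
    filter_upwards [h1, h2] with z hz1 hz2
    rw [Metric.mem_closedBall] at hz2
    have hz : 0 < z.im := by linarith
    have hE := hEst w z hw hz
    have hdist : dist z w = ‖z - w‖ := dist_eq_norm z w
    rw [hdist] at hz2
    refine le_trans hE ?_
    rw [div_le_iff₀ (by positivity : (0:ℝ) < 2*w.im*z.im)]
    have hn : (0:ℝ) ≤ ‖z - w‖ := norm_nonneg _
    have m1 : ‖z-w‖^2 ≤ c * (w.im*w.im) * ‖z-w‖ := by nlinarith [hz2, hn]
    have hwz : w.im ≤ 2 * z.im := by linarith
    have m2 : c * (w.im*w.im) * ‖z-w‖ ≤ c * ‖z-w‖ * (2*w.im*z.im) := by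
      have e : c * (w.im*w.im) * ‖z-w‖ = (c*w.im*‖z-w‖) * w.im := by ring
      have e' : c * ‖z-w‖ * (2*w.im*z.im) = (c*w.im*‖z-w‖) * (2*z.im) := by ring
      rw [e, e']
      exact mul_le_mul_of_nonneg_left hwz (by positivity)
    linarith
  refine ⟨S, ?_, ?_⟩
  · intro z hz
    refine ⟨hSn z hz, hSa z hz, ?_⟩
    intro T hT hTu
    refine aux_eq_of_agree Γ hΓd T (S z) ?_
    intro u
    rw [hTu u, hSa z hz u]
  · intro w hw
    exact (hDeriv w hw).differentiableAt.differentiableWithinAt
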